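/- Let H be a complex inner product space, let N ≥ 1 be an integer, let (u_1, …, u_N) be an orthonormal family in H, and let w_1, …, w_N ∈ H satisfy ‖u_j − w_j‖ ≤ √(1 + 1/(2N)) − 1 for every j. Then for every j one has (2N−1)/(2N) ≤ ‖w_j‖² ≤ (2N+1)/(2N), and Σ_{m ≠ j} |⟨w_j, w_m⟩| ≤ (N−1)/(2N). -/

import Mathlib

/-- Let `H` be a complex inner product space, `N ≥ 1`, let `(u 1, …, u N)` be an
orthonormal family in `H`, and let `w 1, …, w N ∈ H` satisfy
`‖u j - w j‖ ≤ √(1 + 1/(2N)) - 1` for every `j`.  Then for every `j` one has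
`(2N-1)/(2N) ≤ ‖w j‖² ≤ (2N+1)/(2N)` and `∑_{m ≠ j} |⟨w j, w m⟩| ≤ (N-1)/(2N)`. -/
theorem stmt1 {H : Type*} [NormedAddCommGroup H] [InnerProductSpace ℂ H]
    (N : ℕ) (hN : 1 ≤ N) (u w : Fin N → H)
    (hon : Orthonormal ℂ u)
    (hw : ∀ j, ‖u j - w j‖ ≤ Real.sqrt (1 + 1 / (2 * N)) - 1) :
    ∀ j : Fin N,
      ((2 * (N : ℝ) - 1) / (2 * N) ≤ ‖w j‖ ^ 2 ∧ ‖w j‖ ^ 2 ≤ (2 * (N : ℝ) + 1) / (2 * N)) ∧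
      ∑ m ∈ Finset.univ.filter (· ≠ j), ‖(inner ℂ (w j) (w m) : ℂ)‖ ≤ ((N : ℝ) - 1) / (2 * N) := by
  intro j
  set ε := Real.sqrt (1 + 1 / (2 * N)) - 1 with hεdef
  clear_value ε
  have hNpos : (0:ℝ) < N := by exact_mod_cast hN
  have h2N : (0:ℝ) < 2 * N := by linarith
  have hx : (0:ℝ) ≤ 1 + 1/(2*(N:ℝ)) := by positivity
  have hsq : Real.sqrt (1 + 1/(2*(N:ℝ))) ^ 2 = 1 + 1/(2*(N:ℝ)) := Real.sq_sqrt hx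
  have hs1 : (1:ℝ) ≤ Real.sqrt (1 + 1/(2*(N:ℝ))) := by
    nlinarith [Real.sqrt_nonneg (1 + 1/(2*(N:ℝ))), one_div_pos.mpr h2N]
  have hε0 : 0 ≤ ε := hεdef ▸ sub_nonneg.mpr hs1
  have key : 2*ε + ε^2 = 1/(2*(N:ℝ)) := by
    simp only [hεdef]; nlinarith [hsq]
  have hhalf : (1:ℝ)/(2*N) ≤ 1/2 := by
    apply one_div_le_one_div_of_le (by norm_num)
    have : (1:ℝ) ≤ N := by exact_mod_cast hN
    linarith
  have hε1 : ε ≤ 1 := by linarith [sq_nonneg ε, key, hhalf]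
  have key2 : (2*ε + ε^2)*(2*(N:ℝ)) = 1 := by rw [key]; field_simp
  have hunorm : ∀ i, ‖u i‖ = 1 := hon.1
  -- norm bounds
  have hub : ‖w j‖ ≤ 1 + ε := by
    have h := norm_sub_norm_le (w j) (u j)
    rw [norm_sub_rev] at h
    have := hw j
    rw [hunorm j] at h
    linarith
  have hlb : 1 - ε ≤ ‖w j‖ := by
    have h := norm_sub_norm_le (u j) (w j)
    have := hw j
    rw [hunorm j] at h
    linarith
  have hwn : 0 ≤ ‖w j‖ := norm_nonneg _
  refine ⟨⟨?_, ?_⟩, ?_⟩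
  · rw [div_le_iff₀ h2N]
    nlinarith [mul_le_mul hlb hlb (by linarith : (0:ℝ) ≤ 1 - ε) hwn, sq_nonneg ε, key2]
  · rw [le_div_iff₀ h2N]
    nlinarith [mul_le_mul hub hub hwn (by linarith : (0:ℝ) ≤ 1 + ε), key2]
  · have hbound : ∀ m : Fin N, m ≠ j → ‖(inner ℂ (w j) (w m) : ℂ)‖ ≤ 1/(2*(N:ℝ)) := by
      intro m hm
      have h0 : (inner ℂ (u j) (u m) : ℂ) = 0 := hon.2 (Ne.symm hm)
      have hdecomp : (inner ℂ (w j) (w m) : ℂ) =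
          - inner ℂ (u j - w j) (u m) - inner ℂ (u j) (u m - w m)
          + inner ℂ (u j - w j) (u m - w m) := by
        simp only [inner_sub_left, inner_sub_right, h0]
        ring
      have h1 : ‖(inner ℂ (u j - w j) (u m) : ℂ)‖ ≤ ‖u j - w j‖ * ‖u m‖ :=
        norm_inner_le_norm _ _
      have h2 : ‖(inner ℂ (u j) (u m - w m) : ℂ)‖ ≤ ‖u j‖ * ‖u m - w m‖ :=
        norm_inner_le_norm _ _
      have h3 : ‖(inner ℂ (u j - w j) (u m - w m) : ℂ)‖ ≤ ‖u j - w j‖ * ‖u m - w m‖ :=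
        norm_inner_le_norm _ _
      have htri : ‖(inner ℂ (w j) (w m) : ℂ)‖ ≤
          ‖(inner ℂ (u j - w j) (u m) : ℂ)‖ + ‖(inner ℂ (u j) (u m - w m) : ℂ)‖
          + ‖(inner ℂ (u j - w j) (u m - w m) : ℂ)‖ := by
        rw [hdecomp]
        calc ‖- inner ℂ (u j - w j) (u m) - (inner ℂ (u j) (u m - w m) : ℂ)
              + inner ℂ (u j - w j) (u m - w m)‖
            ≤ ‖- inner ℂ (u j - w j) (u m) - (inner ℂ (u j) (u m - w m) : ℂ)‖
              + ‖(inner ℂ (u j - w j) (u m - w m) : ℂ)‖ := norm_add_le _ _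
          _ ≤ ‖(-inner ℂ (u j - w j) (u m) : ℂ)‖ + ‖(inner ℂ (u j) (u m - w m) : ℂ)‖
              + ‖(inner ℂ (u j - w j) (u m - w m) : ℂ)‖ := by
              have := norm_sub_le (-inner ℂ (u j - w j) (u m) : ℂ) (inner ℂ (u j) (u m - w m))
              linarith
          _ = ‖(inner ℂ (u j - w j) (u m) : ℂ)‖ + ‖(inner ℂ (u j) (u m - w m) : ℂ)‖
              + ‖(inner ℂ (u j - w j) (u m - w m) : ℂ)‖ := by rw [norm_neg]
      have hwj := hw j
      have hwm := hw m
      have hj0 : 0 ≤ ‖u j - w j‖ := norm_nonneg _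
      have hm0 : 0 ≤ ‖u m - w m‖ := norm_nonneg _
      rw [← key]
      calc ‖(inner ℂ (w j) (w m) : ℂ)‖
          ≤ ‖(inner ℂ (u j - w j) (u m) : ℂ)‖ + ‖(inner ℂ (u j) (u m - w m) : ℂ)‖
            + ‖(inner ℂ (u j - w j) (u m - w m) : ℂ)‖ := htri
        _ ≤ ‖u j - w j‖ * ‖u m‖ + ‖u j‖ * ‖u m - w m‖ + ‖u j - w j‖ * ‖u m - w m‖ := by
            linarith
        _ ≤ 2*ε + ε^2 := by
            rw [hunorm j, hunorm m]
            nlinarith [mul_le_mul hwj hwm hm0 hε0]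
    have hcard : (Finset.univ.filter (· ≠ j)).card = N - 1 := by
      rw [Finset.filter_ne', Finset.card_erase_of_mem (Finset.mem_univ j)]
      simp
    calc ∑ m ∈ Finset.univ.filter (· ≠ j), ‖(inner ℂ (w j) (w m) : ℂ)‖
        ≤ ∑ _m ∈ Finset.univ.filter (· ≠ j), 1/(2*(N:ℝ)) :=
          Finset.sum_le_sum (fun m hm => hbound m (Finset.mem_filter.mp hm).2)
      _ = ((N:ℝ) - 1) * (1/(2*(N:ℝ))) := by
          rw [Finset.sum_const, hcard, nsmul_eq_mul, Nat.cast_sub hN]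
          norm_num
      _ = ((N:ℝ) - 1) / (2*(N:ℝ)) := by ring
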